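/- For the family of unitaries U_n = |0⟩⟨0|⊗I_{n−2}⊗A_1 + |1⟩⟨1|⊗I_{n−2}⊗B_1 + |0⟩⟨1|⊗X_{n−2}⊗C_1 + |1⟩⟨0|⊗X_{n−2}⊗D_1, the DQC1 state ρ_{n+1}(α) has, for any bipartite division putting qubits 1 and n in different parts, the same multiplicative negativity as the corresponding three-qubit state: M(ρ_{n+1}(α)) = M(ρ_3(α)), independent of n ≥ 2. -/

import Mathlib

open Matrix Kronecker Polynomial

/-- Trace norm of a Hermitian matrix: sum of the absolute values of its eigenvalues. -/
noncomputable def traceNorm {n : Type*} [Fintype n] [DecidableEq n]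
    (A : Matrix n n ℂ) : ℝ :=
  if h : A.IsHermitian then ∑ i, |h.eigenvalues i| else 0

/-- The DQC1 output state on the special qubit together with `n` qubits split as `A × B`:
`ρ = (1/2N)(I + α(|0⟩⟨1| ⊗ U† + |1⟩⟨0| ⊗ U))`, `N = dim(A × B)`. -/
noncomputable def dqc1State {A B : Type*} [Fintype A] [Fintype B] [DecidableEq A]
    [DecidableEq B] (a : ℝ) (U : Matrix (A × B) (A × B) ℂ) :
    Matrix (Fin 2 × (A × B)) (Fin 2 × (A × B)) ℂ :=
  (2 * (Fintype.card (A × B) : ℂ))⁻¹ •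
    (1 + (a : ℂ) • (Matrix.single 0 1 1 ⊗ₖ Uᴴ + Matrix.single 1 0 1 ⊗ₖ U))

/-- Partial transpose of the DQC1 state over the part `B` (the part not containing the
special qubit). -/
def ptB {A B : Type*} (ρ : Matrix (Fin 2 × (A × B)) (Fin 2 × (A × B)) ℂ) :
    Matrix (Fin 2 × (A × B)) (Fin 2 × (A × B)) ℂ :=
  Matrix.of fun p q => ρ (p.1, (p.2.1, q.2.2)) (q.1, (q.2.1, p.2.2))

/-- Partial transpose of an operator on `A × B` over the `B` factor. -/
def ptU {A B : Type*} (U : Matrix (A × B) (A × B) ℂ) : Matrix (A × B) (A × B) ℂ :=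
  Matrix.of fun p q => U (p.1, q.2) (q.1, p.2)

/-- Partial transpose of the DQC1 state over the part `A` (grouping the special qubit with
the `B` factor instead). -/
def ptA {A B : Type*} (ρ : Matrix (Fin 2 × (A × B)) (Fin 2 × (A × B)) ℂ) :
    Matrix (Fin 2 × (A × B)) (Fin 2 × (A × B)) ℂ :=
  Matrix.of fun p q => ρ (p.1, (q.2.1, p.2.2)) (q.1, (p.2.1, q.2.2))

/-- The two-qubit unitary `U₂ = [[A₁, C₁],[D₁, B₁]]` built from `2×2` blocks. -/
noncomputable def U2gen (A1 B1 C1 D1 : Matrix (Fin 2) (Fin 2) ℂ) :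
    Matrix (Fin 2 × Fin 2) (Fin 2 × Fin 2) ℂ :=
  Matrix.single 0 0 1 ⊗ₖ A1 + Matrix.single 0 1 1 ⊗ₖ C1 +
  Matrix.single 1 0 1 ⊗ₖ D1 + Matrix.single 1 1 1 ⊗ₖ B1

/-- The `n`-qubit unitary
`U_n = |0⟩⟨0|⊗I_{n−2}⊗A₁ + |1⟩⟨1|⊗I_{n−2}⊗B₁ + |0⟩⟨1|⊗X_{n−2}⊗C₁ + |1⟩⟨0|⊗X_{n−2}⊗D₁`,
with the `n−2` middle qubits split into two groups of sizes `m₁` and `m₂` (so that any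
bipartite division separating the first and last unpolarized qubits is realized). -/
noncomputable def Ufam (m₁ m₂ : ℕ) (A1 B1 C1 D1 : Matrix (Fin 2) (Fin 2) ℂ) :
    Matrix ((Fin 2 × (Fin m₁ → Fin 2)) × ((Fin m₂ → Fin 2) × Fin 2))
           ((Fin 2 × (Fin m₁ → Fin 2)) × ((Fin m₂ → Fin 2) × Fin 2)) ℂ :=
  Matrix.of fun p q =>
    if p.1.1 = 0 ∧ q.1.1 = 0 then
      (if p.1.2 = q.1.2 ∧ p.2.1 = q.2.1 then A1 p.2.2 q.2.2 else 0)
    else if p.1.1 = 0 ∧ q.1.1 = 1 then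
      (if (∀ i, q.1.2 i ≠ p.1.2 i) ∧ (∀ i, q.2.1 i ≠ p.2.1 i) then C1 p.2.2 q.2.2 else 0)
    else if p.1.1 = 1 ∧ q.1.1 = 0 then
      (if (∀ i, q.1.2 i ≠ p.1.2 i) ∧ (∀ i, q.2.1 i ≠ p.2.1 i) then D1 p.2.2 q.2.2 else 0)
    else
      (if p.1.2 = q.1.2 ∧ p.2.1 = q.2.1 then B1 p.2.2 q.2.2 else 0)

/-! ### Auxiliary spectral machinery -/

section Spectral

variable {n m : Type*} [Fintype n] [DecidableEq n] [Fintype m] [DecidableEq m]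

lemma charmatrix_diagonal' (d : n → ℂ) :
    charmatrix (diagonal d) = diagonal (fun i => (X : ℂ[X]) - C (d i)) := by
  ext i j
  rcases eq_or_ne i j with h | h
  · subst h; simp
  · simp [charmatrix_apply_ne _ _ _ h, diagonal_apply_ne _ h]

lemma charpoly_diagonal' (d : n → ℂ) :
    (diagonal d).charpoly = ∏ i, ((X : ℂ[X]) - C (d i)) := by
  rw [charpoly, charmatrix_diagonal', det_diagonal]

lemma charpoly_unitary_conj (U : Matrix.unitaryGroup n ℂ) (D : Matrix n n ℂ) :
    ((U : Matrix n n ℂ) * D * star (U : Matrix n n ℂ)).charpoly = D.charpoly := by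
  set Uc := (U : Matrix n n ℂ)
  have hU : Uc * star Uc = 1 := Matrix.mem_unitaryGroup_iff.mp U.2
  have hmap : (Uc.map (C : ℂ → ℂ[X])) * ((star Uc).map C) = 1 := by
    rw [← Matrix.map_mul, hU, Matrix.map_one _ C.map_zero C.map_one]
  have hchar : charmatrix (Uc * D * star Uc)
      = (Uc.map C) * charmatrix D * ((star Uc).map C) := by
    rw [charmatrix]
    rw [charmatrix, mul_sub, sub_mul]
    congr 1
    · rw [Matrix.scalar_apply]
      have h1 : (Uc.map (C : ℂ → ℂ[X])) * (diagonal fun _ => (X : ℂ[X]))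
          * ((star Uc).map C) = diagonal fun _ => (X : ℂ[X]) := by
        rw [← Matrix.smul_one_eq_diagonal, Matrix.mul_smul, mul_one, Matrix.smul_mul, hmap]
      exact h1.symm
    · simp [RingHom.mapMatrix_apply, Matrix.map_mul]
  rw [charpoly, hchar, det_mul, det_mul, mul_comm ((Uc.map C).det), mul_assoc,
    ← det_mul, hmap, det_one, mul_one, charpoly]

lemma charpoly_smul_hermitian {A : Matrix n n ℂ} (hA : A.IsHermitian) (c : ℝ) :
    (((c : ℝ) : ℂ) • A).charpoly
      = ∏ i, ((X : ℂ[X]) - C ((c : ℂ) * (hA.eigenvalues i : ℂ))) := by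
  conv_lhs => rw [hA.spectral_theorem, Unitary.conjStarAlgAut_apply]
  rw [show ((c:ℂ)) • ((hA.eigenvectorUnitary : Matrix n n ℂ) * diagonal (RCLike.ofReal ∘ hA.eigenvalues)
      * star (hA.eigenvectorUnitary : Matrix n n ℂ))
    = (hA.eigenvectorUnitary : Matrix n n ℂ) * ((c:ℂ) • diagonal (RCLike.ofReal ∘ hA.eigenvalues))
      * star (hA.eigenvectorUnitary : Matrix n n ℂ) by
      rw [Matrix.mul_smul, Matrix.smul_mul], ← Matrix.diagonal_smul]
  rw [charpoly_unitary_conj hA.eigenvectorUnitary, charpoly_diagonal']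
  exact Finset.prod_congr rfl fun i _ => by simp

lemma roots_charpoly_smul_hermitian {A : Matrix n n ℂ} (hA : A.IsHermitian) (c : ℝ) :
    (((c : ℝ) : ℂ) • A).charpoly.roots
      = Finset.univ.val.map (fun i => (c : ℂ) * (hA.eigenvalues i : ℂ)) := by
  rw [charpoly_smul_hermitian hA c, Finset.prod_eq_multiset_prod]
  rw [show Multiset.map (fun i => (X:ℂ[X]) - C ((c : ℂ) * (hA.eigenvalues i : ℂ))) Finset.univ.val
      = Multiset.map (fun z : ℂ => (X:ℂ[X]) - C z)
          (Multiset.map (fun i => (c : ℂ) * (hA.eigenvalues i : ℂ)) Finset.univ.val) by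
        rw [Multiset.map_map]; rfl,
    roots_multiset_prod_X_sub_C]

lemma kron_one_eq_blockDiagonal (A : Matrix n n ℂ) :
    A ⊗ₖ (1 : Matrix m m ℂ) = blockDiagonal (fun _ : m => A) := by
  ext ⟨i, b⟩ ⟨j, b'⟩
  simp [Matrix.kroneckerMap_apply, Matrix.one_apply, Matrix.blockDiagonal_apply, mul_ite]

lemma charmatrix_blockDiagonal (M : m → Matrix n n ℂ) :
    charmatrix (blockDiagonal M) = blockDiagonal fun b => charmatrix (M b) := by
  ext ⟨i, b⟩ ⟨j, b'⟩
  rcases eq_or_ne b b' with hb | hb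
  · subst hb
    rcases eq_or_ne i j with hij | hij
    · subst hij; simp
    · have h : ((i, b) : n × m) ≠ (j, b) := by simp [hij]
      simp [charmatrix_apply_ne _ _ _ h, charmatrix_apply_ne _ _ _ hij,
        Matrix.blockDiagonal_apply]
  · have h : ((i, b) : n × m) ≠ (j, b') := by simp [hb]
    simp [charmatrix_apply_ne _ _ _ h, Matrix.blockDiagonal_apply, hb]

lemma charpoly_kron_one (A : Matrix n n ℂ) :
    (A ⊗ₖ (1 : Matrix m m ℂ)).charpoly = A.charpoly ^ Fintype.card m := by
  rw [kron_one_eq_blockDiagonal, charpoly, charmatrix_blockDiagonal, det_blockDiagonal,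
    Finset.prod_const, Finset.card_univ, charpoly]

lemma charpoly_submatrix_equiv {l : Type*} [Fintype l] [DecidableEq l]
    (A : Matrix n n ℂ) (e : l ≃ n) :
    (A.submatrix e e).charpoly = A.charpoly := by
  have : A.submatrix e e = Matrix.reindex e.symm e.symm A := by
    ext p q; simp [Matrix.reindex_apply]
  rw [this, Matrix.charpoly_reindex]

lemma traceNorm_eq_sum_roots {A : Matrix n n ℂ} (hA : A.IsHermitian) :
    traceNorm A = ((A.charpoly.roots).map fun z => |z.re|).sum := by
  have hroots : A.charpoly.roots = Finset.univ.val.map (fun i => (hA.eigenvalues i : ℂ)) := by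
    have := roots_charpoly_smul_hermitian hA 1
    simpa using this
  rw [traceNorm, dif_pos hA, hroots, Multiset.map_map, Finset.sum_eq_multiset_sum]
  congr 1

end Spectral

/-! ### Hermiticity -/

lemma isHermitian_dqc1State {A B : Type*} [Fintype A] [Fintype B] [DecidableEq A]
    [DecidableEq B] (a : ℝ) (U : Matrix (A × B) (A × B) ℂ) :
    (dqc1State a U).IsHermitian := by
  rw [Matrix.IsHermitian]
  ext ⟨s, p⟩ ⟨t, q⟩
  fin_cases s <;> fin_cases t <;>
    simp [dqc1State, Matrix.conjTranspose_apply, Matrix.one_apply, Matrix.single,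
      Prod.ext_iff, eq_comm, star_inv₀, mul_comm] <;>
    simp [apply_ite (starRingEnd ℂ), map_inv₀, _root_.map_mul, Complex.conj_ofNat]

lemma isHermitian_ptB {A B : Type*} [Fintype A] [Fintype B] [DecidableEq A] [DecidableEq B]
    {ρ : Matrix (Fin 2 × (A × B)) (Fin 2 × (A × B)) ℂ} (hρ : ρ.IsHermitian) :
    (ptB ρ).IsHermitian := by
  rw [Matrix.IsHermitian]
  ext p q
  have := congrFun (congrFun hρ.symm (q.1, (q.2.1, p.2.2))) (p.1, (p.2.1, q.2.2))
  simpa [ptB, Matrix.conjTranspose_apply] using congrArg star this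

lemma isHermitian_ptA {A B : Type*} [Fintype A] [Fintype B] [DecidableEq A] [DecidableEq B]
    {ρ : Matrix (Fin 2 × (A × B)) (Fin 2 × (A × B)) ℂ} (hρ : ρ.IsHermitian) :
    (ptA ρ).IsHermitian := by
  rw [Matrix.IsHermitian]
  ext p q
  have := congrFun (congrFun hρ.symm (q.1, (p.2.1, q.2.2))) (p.1, (q.2.1, p.2.2))
  simpa [ptA, Matrix.conjTranspose_apply] using congrArg star this

/-! ### The flip equivalence and the core combinatorial identities -/

def flip2 {m : ℕ} (x : Fin m → Fin 2) : Fin m → Fin 2 := fun i => x i + 1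

@[simp] lemma flip2_flip2 {m : ℕ} (x : Fin m → Fin 2) : flip2 (flip2 x) = x := by
  funext i
  have : ∀ a : Fin 2, a + 1 + 1 = a := by decide
  simp [flip2, this]

lemma flip2_inj {m : ℕ} {x y : Fin m → Fin 2} : flip2 x = flip2 y ↔ x = y :=
  ⟨fun h => by simpa using congrArg flip2 h, fun h => h ▸ rfl⟩

lemma flip2_eq_iff {m : ℕ} {x y : Fin m → Fin 2} : flip2 x = y ↔ x = flip2 y :=
  ⟨fun h => by simp [← h], fun h => by simp [h]⟩

@[simp] lemma ne_iff_flip2 {m : ℕ} (b c : Fin m → Fin 2) :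
    (∀ i, b i ≠ c i) ↔ b = flip2 c := by
  have h : ∀ p q : Fin 2, p ≠ q ↔ p = q + 1 := by decide
  simp only [funext_iff, flip2]
  exact forall_congr' fun i => h _ _

def midSwap (m₁ m₂ : ℕ) :
    (Fin 2 × ((Fin 2 × (Fin m₁ → Fin 2)) × ((Fin m₂ → Fin 2) × Fin 2))) ≃
      ((Fin 2 × (Fin 2 × Fin 2)) × ((Fin m₁ → Fin 2) × (Fin m₂ → Fin 2))) where
  toFun p := ((p.1, (p.2.1.1, p.2.2.2)),
    if p.2.1.1 = 1 then (flip2 p.2.1.2, flip2 p.2.2.1) else (p.2.1.2, p.2.2.1))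
  invFun r := (r.1.1, ((r.1.2.1, if r.1.2.1 = 1 then flip2 r.2.1 else r.2.1),
    ((if r.1.2.1 = 1 then flip2 r.2.2 else r.2.2), r.1.2.2)))
  left_inv := by
    rintro ⟨s, ⟨⟨t, x⟩, ⟨y, u⟩⟩⟩
    by_cases h : t = 1 <;> simp [h]
  right_inv := by
    rintro ⟨⟨s, ⟨t, u⟩⟩, ⟨x, y⟩⟩
    by_cases h : t = 1 <;> simp [h]

set_option maxHeartbeats 1600000 in
lemma coreB (m₁ m₂ : ℕ) (A1 B1 C1 D1 : Matrix (Fin 2) (Fin 2) ℂ) (a : ℝ) :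
    ptB (1 + (a : ℂ) • (Matrix.single 0 1 1 ⊗ₖ (Ufam m₁ m₂ A1 B1 C1 D1)ᴴ +
        Matrix.single 1 0 1 ⊗ₖ Ufam m₁ m₂ A1 B1 C1 D1)) =
      ((ptB (1 + (a : ℂ) • (Matrix.single 0 1 1 ⊗ₖ (U2gen A1 B1 C1 D1)ᴴ +
          Matrix.single 1 0 1 ⊗ₖ U2gen A1 B1 C1 D1))) ⊗ₖ
        (1 : Matrix ((Fin m₁ → Fin 2) × (Fin m₂ → Fin 2))
              ((Fin m₁ → Fin 2) × (Fin m₂ → Fin 2)) ℂ)).submatrix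
        (midSwap m₁ m₂) (midSwap m₁ m₂) := by
  ext ⟨s, ⟨⟨t, x⟩, ⟨y, u⟩⟩⟩ ⟨s', ⟨⟨t', x'⟩, ⟨y', u'⟩⟩⟩
  fin_cases s <;> fin_cases s' <;> fin_cases t <;> fin_cases t' <;>
    simp [ptB, Ufam, U2gen, midSwap, Matrix.one_apply, Matrix.conjTranspose_apply,
      Matrix.single, Prod.ext_iff, apply_ite (starRingEnd ℂ)] <;>
    split_ifs <;> simp_all [flip2_inj, flip2_eq_iff]

set_option maxHeartbeats 1600000 in
lemma coreA (m₁ m₂ : ℕ) (A1 B1 C1 D1 : Matrix (Fin 2) (Fin 2) ℂ) (a : ℝ) :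
    ptA (1 + (a : ℂ) • (Matrix.single 0 1 1 ⊗ₖ (Ufam m₁ m₂ A1 B1 C1 D1)ᴴ +
        Matrix.single 1 0 1 ⊗ₖ Ufam m₁ m₂ A1 B1 C1 D1)) =
      ((ptA (1 + (a : ℂ) • (Matrix.single 0 1 1 ⊗ₖ (U2gen A1 B1 C1 D1)ᴴ +
          Matrix.single 1 0 1 ⊗ₖ U2gen A1 B1 C1 D1))) ⊗ₖ
        (1 : Matrix ((Fin m₁ → Fin 2) × (Fin m₂ → Fin 2))
              ((Fin m₁ → Fin 2) × (Fin m₂ → Fin 2)) ℂ)).submatrix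
        (midSwap m₁ m₂) (midSwap m₁ m₂) := by
  ext ⟨s, ⟨⟨t, x⟩, ⟨y, u⟩⟩⟩ ⟨s', ⟨⟨t', x'⟩, ⟨y', u'⟩⟩⟩
  fin_cases s <;> fin_cases s' <;> fin_cases t <;> fin_cases t' <;>
    simp [ptA, Ufam, U2gen, midSwap, Matrix.one_apply, Matrix.conjTranspose_apply,
      Matrix.single, Prod.ext_iff, apply_ite (starRingEnd ℂ)] <;>
    split_ifs <;> simp_all [flip2_inj, flip2_eq_iff]

/-! ### Scaled identities -/

lemma ptB_smul {A B : Type*} (c : ℂ) (M : Matrix (Fin 2 × (A × B)) (Fin 2 × (A × B)) ℂ) :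
    ptB (c • M) = c • ptB M := rfl

lemma ptA_smul {A B : Type*} (c : ℂ) (M : Matrix (Fin 2 × (A × B)) (Fin 2 × (A × B)) ℂ) :
    ptA (c • M) = c • ptA M := rfl

lemma card_scalar_eq (m₁ m₂ : ℕ) :
    (2 * (Fintype.card ((Fin 2 × (Fin m₁ → Fin 2)) × ((Fin m₂ → Fin 2) × Fin 2)) : ℂ))⁻¹
      = ((((Fintype.card ((Fin m₁ → Fin 2) × (Fin m₂ → Fin 2)) : ℝ))⁻¹ : ℂ))
          * (2 * (Fintype.card (Fin 2 × Fin 2) : ℂ))⁻¹ := by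
  have h1 : (2 : ℂ) ^ m₁ ≠ 0 := pow_ne_zero _ two_ne_zero
  have h2 : (2 : ℂ) ^ m₂ ≠ 0 := pow_ne_zero _ two_ne_zero
  simp only [Fintype.card_prod, Fintype.card_fun, Fintype.card_fin]
  push_cast
  field_simp
  ring

lemma keyB (m₁ m₂ : ℕ) (A1 B1 C1 D1 : Matrix (Fin 2) (Fin 2) ℂ) (a : ℝ) :
    ptB (dqc1State a (Ufam m₁ m₂ A1 B1 C1 D1)) =
      (((Fintype.card ((Fin m₁ → Fin 2) × (Fin m₂ → Fin 2)) : ℝ)⁻¹ : ℂ) • (ptB (dqc1State a (U2gen A1 B1 C1 D1)) ⊗ₖ (1 : Matrix ((Fin m₁ → Fin 2) × (Fin m₂ → Fin 2)) ((Fin m₁ → Fin 2) × (Fin m₂ → Fin 2)) ℂ))).submatrix (midSwap m₁ m₂) (midSwap m₁ m₂) := by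
  rw [dqc1State, dqc1State, ptB_smul, ptB_smul, coreB, Matrix.smul_kronecker, smul_smul, card_scalar_eq]
  rfl

lemma keyA (m₁ m₂ : ℕ) (A1 B1 C1 D1 : Matrix (Fin 2) (Fin 2) ℂ) (a : ℝ) :
    ptA (dqc1State a (Ufam m₁ m₂ A1 B1 C1 D1)) =
      (((Fintype.card ((Fin m₁ → Fin 2) × (Fin m₂ → Fin 2)) : ℝ)⁻¹ : ℂ) • (ptA (dqc1State a (U2gen A1 B1 C1 D1)) ⊗ₖ (1 : Matrix ((Fin m₁ → Fin 2) × (Fin m₂ → Fin 2)) ((Fin m₁ → Fin 2) × (Fin m₂ → Fin 2)) ℂ))).submatrix (midSwap m₁ m₂) (midSwap m₁ m₂) := by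
  rw [dqc1State, dqc1State, ptA_smul, ptA_smul, coreA, Matrix.smul_kronecker, smul_smul, card_scalar_eq]
  rfl

/-! ### Main trace-norm transfer -/

lemma traceNorm_transfer {n m : Type*} [Fintype n] [DecidableEq n] [Fintype m]
    [DecidableEq m] [Nonempty m] {l : Type*} [Fintype l] [DecidableEq l]
    {S : Matrix n n ℂ} (hS : S.IsHermitian)
    {Big : Matrix l l ℂ} (hBig : Big.IsHermitian)
    (e : l ≃ n × m)
    (hkey : Big = (((Fintype.card m : ℝ)⁻¹ : ℂ) • (S ⊗ₖ (1 : Matrix m m ℂ))).submatrix e e) :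
    traceNorm Big = traceNorm S := by
  have hKpos : 0 < (Fintype.card m : ℝ) := by positivity
  have hc : (((Fintype.card m : ℝ))⁻¹ : ℂ) = Complex.ofReal ((Fintype.card m : ℝ)⁻¹) := by
    push_cast
    ring
  have hkey' : Big = ((Complex.ofReal ((Fintype.card m : ℝ)⁻¹) • S)
      ⊗ₖ (1 : Matrix m m ℂ)).submatrix e e := by
    rw [hkey, hc, Matrix.smul_kronecker]
  have hcharpoly : Big.charpoly
      = (Complex.ofReal ((Fintype.card m : ℝ)⁻¹) • S).charpoly ^ Fintype.card m := by
    rw [hkey', charpoly_submatrix_equiv, charpoly_kron_one]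
  have hroots : Big.charpoly.roots = Fintype.card m • (Finset.univ.val.map
      (fun i => Complex.ofReal ((Fintype.card m : ℝ)⁻¹) * (hS.eigenvalues i : ℂ))) := by
    rw [hcharpoly, Polynomial.roots_pow]
    congr 1
    exact roots_charpoly_smul_hermitian hS ((Fintype.card m : ℝ)⁻¹)
  rw [traceNorm_eq_sum_roots hBig, hroots, Multiset.map_nsmul, Multiset.sum_nsmul,
    Multiset.map_map]
  have hterm : ∀ i : n, ((fun z : ℂ => |z.re|) ∘
      fun i => Complex.ofReal ((Fintype.card m : ℝ)⁻¹) * (hS.eigenvalues i : ℂ)) i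
      = (Fintype.card m : ℝ)⁻¹ * |hS.eigenvalues i| := by
    intro i
    simp only [Function.comp_apply, ← Complex.ofReal_mul, Complex.ofReal_re]
    rw [abs_mul, abs_of_nonneg (by positivity)]
  rw [Multiset.map_congr rfl fun i _ => hterm i, ← Finset.sum_eq_multiset_sum,
    ← Finset.mul_sum, traceNorm, dif_pos hS, nsmul_eq_mul, ← mul_assoc,
    mul_inv_cancel₀ (ne_of_gt hKpos), one_mul]

/-- For the family of unitaries `U_n` built from a two-qubit unitary `U₂`, the DQC1 state
has, for any bipartite division putting the first and last unpolarized qubits in different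
parts, the same multiplicative negativity as the corresponding three-qubit state:
`M(ρ_{n+1}(α)) = M(ρ₃(α))`, independent of `n ≥ 2`. -/
theorem stmt_15 (m₁ m₂ : ℕ) (A1 B1 C1 D1 : Matrix (Fin 2) (Fin 2) ℂ)
    (hU2 : (U2gen A1 B1 C1 D1)ᴴ * U2gen A1 B1 C1 D1 = 1) (a : ℝ) :
    traceNorm (ptB (dqc1State a (Ufam m₁ m₂ A1 B1 C1 D1))) =
      traceNorm (ptB (dqc1State a (U2gen A1 B1 C1 D1))) ∧
    traceNorm (ptA (dqc1State a (Ufam m₁ m₂ A1 B1 C1 D1))) =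
      traceNorm (ptA (dqc1State a (U2gen A1 B1 C1 D1))) := by
  constructor
  · exact traceNorm_transfer (isHermitian_ptB (isHermitian_dqc1State a _))
      (isHermitian_ptB (isHermitian_dqc1State a _)) (midSwap m₁ m₂) (keyB m₁ m₂ A1 B1 C1 D1 a)
  · exact traceNorm_transfer (isHermitian_ptA (isHermitian_dqc1State a _))
      (isHermitian_ptA (isHermitian_dqc1State a _)) (midSwap m₁ m₂) (keyA m₁ m₂ A1 B1 C1 D1 a)
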